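/- Let A : [t₀,∞) → (ℝⁿ →L[ℝ] ℝⁿ) be continuous and let z : [t₀,∞) → ℝⁿ be differentiable with z'(t) = A(t) z(t) for all t ≥ t₀. Then for all t ≥ t₀, ‖z(t)‖ ≥ ‖z(t₀)‖ · exp(−∫_{t₀}^{t} μ(−A(s)) ds), where μ(B) = sup_{‖v‖=1} ⟪B v, v⟫ is the Euclidean logarithmic norm. -/

import Mathlib

open Filter Topology
open scoped RealInnerProductSpace

/-- The Euclidean logarithmic norm of an operator `B : ℝⁿ →L[ℝ] ℝⁿ`,
`μ(B) = sup_{‖v‖=1} ⟪Bv, v⟫`. -/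
noncomputable def logNorm {n : ℕ}
    (B : EuclideanSpace ℝ (Fin n) →L[ℝ] EuclideanSpace ℝ (Fin n)) : ℝ :=
  ⨆ v : {v : EuclideanSpace ℝ (Fin n) // ‖v‖ = 1}, ⟪B v.1, v.1⟫

lemma logNorm_bddAbove {n : ℕ}
    (B : EuclideanSpace ℝ (Fin n) →L[ℝ] EuclideanSpace ℝ (Fin n)) :
    BddAbove (Set.range fun v : {v : EuclideanSpace ℝ (Fin n) // ‖v‖ = 1} => ⟪B v.1, v.1⟫) := by
  refine ⟨‖B‖, ?_⟩
  rintro _ ⟨v, rfl⟩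
  calc ⟪B v.1, v.1⟫ ≤ ‖B v.1‖ * ‖v.1‖ := real_inner_le_norm _ _
    _ ≤ (‖B‖ * ‖v.1‖) * ‖v.1‖ := by gcongr; exact B.le_opNorm _
    _ = ‖B‖ := by rw [v.2]; ring

lemma inner_le_logNorm {n : ℕ}
    (B : EuclideanSpace ℝ (Fin n) →L[ℝ] EuclideanSpace ℝ (Fin n))
    (v : EuclideanSpace ℝ (Fin n)) : ⟪B v, v⟫ ≤ logNorm B * ‖v‖ ^ 2 := by
  rcases eq_or_ne v 0 with rfl | hv
  · simp
  · have hnv : ‖v‖ ≠ 0 := norm_ne_zero_iff.2 hv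
    set w : {v : EuclideanSpace ℝ (Fin n) // ‖v‖ = 1} :=
      ⟨‖v‖⁻¹ • v, by simp [norm_smul, hnv]⟩ with hw
    have h1 : ⟪B w.1, w.1⟫ ≤ logNorm B := le_ciSup (logNorm_bddAbove B) w
    have h2 : ⟪B w.1, w.1⟫ = (‖v‖⁻¹ * ‖v‖⁻¹) * ⟪B v, v⟫ := by
      simp only [hw, map_smul, real_inner_smul_left, real_inner_smul_right]
      ring
    rw [h2] at h1
    have hpos : (0:ℝ) < ‖v‖ ^ 2 := by positivity
    calc ⟪B v, v⟫ = ((‖v‖⁻¹ * ‖v‖⁻¹) * ⟪B v, v⟫) * ‖v‖ ^ 2 := by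
          rw [pow_two]; field_simp
      _ ≤ logNorm B * ‖v‖ ^ 2 := by gcongr

lemma logNorm_le_add {n : ℕ} [Nonempty {v : EuclideanSpace ℝ (Fin n) // ‖v‖ = 1}]
    (B C : EuclideanSpace ℝ (Fin n) →L[ℝ] EuclideanSpace ℝ (Fin n)) :
    logNorm B ≤ logNorm C + ‖B - C‖ := by
  refine ciSup_le fun v => ?_
  have h1 : ⟪C v.1, v.1⟫ ≤ logNorm C := le_ciSup (logNorm_bddAbove C) v
  have h2 : ⟪(B - C) v.1, v.1⟫ ≤ ‖B - C‖ := by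
    calc ⟪(B - C) v.1, v.1⟫ ≤ ‖(B - C) v.1‖ * ‖v.1‖ := real_inner_le_norm _ _
      _ ≤ (‖B - C‖ * ‖v.1‖) * ‖v.1‖ := by gcongr; exact (B - C).le_opNorm _
      _ = ‖B - C‖ := by rw [v.2]; ring
  have h3 : ⟪B v.1, v.1⟫ = ⟪C v.1, v.1⟫ + ⟪(B - C) v.1, v.1⟫ := by
    simp only [ContinuousLinearMap.sub_apply, inner_sub_left]; ring
  rw [h3]; exact add_le_add h1 h2

lemma logNorm_lipschitz {n : ℕ} [Nonempty {v : EuclideanSpace ℝ (Fin n) // ‖v‖ = 1}] :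
    LipschitzWith 1 (logNorm (n := n)) := by
  refine LipschitzWith.of_dist_le_mul fun B C => ?_
  rw [NNReal.coe_one, one_mul, dist_eq_norm, dist_eq_norm, Real.norm_eq_abs, abs_le]
  constructor
  · have := logNorm_le_add C B
    rw [show C - B = -(B - C) from (neg_sub B C).symm, norm_neg] at this
    linarith
  · have := logNorm_le_add B C
    linarith


/-- Property P5, lower bound. A solution of the linear
time-varying system `ż = A(t)z` satisfies
`‖z(t)‖ ≥ ‖z(t₀)‖ · exp(-∫_{t₀}^t μ(-A(s)) ds)`. -/
theorem norm_ge_exp_neg_integral_logNorm {n : ℕ} (t₀ : ℝ)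
    (A : ℝ → EuclideanSpace ℝ (Fin n) →L[ℝ] EuclideanSpace ℝ (Fin n))
    (hA : ContinuousOn A (Set.Ici t₀))
    (z : ℝ → EuclideanSpace ℝ (Fin n))
    (hz : ∀ t, t₀ ≤ t → HasDerivAt z (A t (z t)) t) :
    ∀ t, t₀ ≤ t →
      ‖z t₀‖ * Real.exp (-∫ s in t₀..t, logNorm (-(A s))) ≤ ‖z t‖ := by
  rcases Nat.eq_zero_or_pos n with hn | hn
  · subst hn
    intro t ht
    have hz0 : z t₀ = 0 := Subsingleton.elim _ _
    simp only [hz0, norm_zero, zero_mul]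
    exact norm_nonneg _
  · haveI : Nonempty {v : EuclideanSpace ℝ (Fin n) // ‖v‖ = 1} :=
      ⟨⟨EuclideanSpace.single ⟨0, hn⟩ (1 : ℝ), by
        simp [EuclideanSpace.norm_single]⟩⟩
    intro t ht
    rcases eq_or_lt_of_le ht with rfl | htlt
    · simp
    set c : ℝ → ℝ := fun s => logNorm (-(A s)) with hcdef
    have hccont : ContinuousOn c (Set.Ici t₀) :=
      logNorm_lipschitz.continuous.comp_continuousOn hA.neg
    set F : ℝ → ℝ := fun x => ∫ s in t₀..x, c s with hFdef
    set h : ℝ → ℝ := fun x => ‖z x‖ ^ 2 * Real.exp (2 * F x) with hhdef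
    have hzc : ContinuousOn z (Set.Ici t₀) := fun x hx =>
      (hz x hx).continuousAt.continuousWithinAt
    have hint : MeasureTheory.IntegrableOn c (Set.uIcc t₀ t) :=
      (hccont.mono (by rw [Set.uIcc_of_le ht]; exact Set.Icc_subset_Ici_self)).integrableOn_compact
        isCompact_uIcc
    have hFc : ContinuousOn F (Set.Icc t₀ t) := by
      have := intervalIntegral.continuousOn_primitive_interval hint
      rwa [Set.uIcc_of_le ht] at this
    have hhc : ContinuousOn h (Set.Icc t₀ t) := by
      apply ContinuousOn.mul
      · exact ((hzc.mono Set.Icc_subset_Ici_self).norm.pow 2)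
      · exact Real.continuous_exp.comp_continuousOn (continuousOn_const.mul hFc)
    -- derivative of h on the interior
    have HD : ∀ x ∈ Set.Ioo t₀ t,
        HasDerivAt h (2 * ⟪A x (z x), z x⟫ * Real.exp (2 * F x)
          + ‖z x‖ ^ 2 * (Real.exp (2 * F x) * (2 * c x))) x := by
      intro x hx
      have hx1 : t₀ < x := hx.1
      -- derivative of F
      have hint' : IntervalIntegrable c MeasureTheory.volume t₀ x :=
        (hccont.mono (by rw [Set.uIcc_of_le hx1.le]; exact Set.Icc_subset_Ici_self)).intervalIntegrable
      have hmeas : StronglyMeasurableAtFilter c (𝓝 x) :=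
        (hccont.mono Set.Ioi_subset_Ici_self).stronglyMeasurableAtFilter isOpen_Ioi x hx.1
      have hcx : ContinuousAt c x := hccont.continuousAt (Ici_mem_nhds hx1)
      have hFd : HasDerivAt F (c x) x :=
        intervalIntegral.integral_hasDerivAt_right hint' hmeas hcx
      -- derivative of ‖z‖²
      have hzx := hz x hx1.le
      have hy0 := hzx.inner ℝ hzx
      have hy : HasDerivAt (fun s => ‖z s‖ ^ 2) (2 * ⟪A x (z x), z x⟫) x := by
        have heq : (fun s => (⟪z s, z s⟫ : ℝ)) = fun s => ‖z s‖ ^ 2 := by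
          funext s; exact real_inner_self_eq_norm_sq _
        rw [heq] at hy0
        refine hy0.congr_deriv ?_
        rw [real_inner_comm]; ring
      have hexp : HasDerivAt (fun s => Real.exp (2 * F s))
          (Real.exp (2 * F x) * (2 * c x)) x := (hFd.const_mul 2).exp
      exact hy.mul hexp
    have hderiv_nonneg : ∀ x ∈ Set.Ioo t₀ t, 0 ≤ deriv h x := by
      intro x hx
      rw [(HD x hx).deriv]
      have hb := inner_le_logNorm (-(A x)) (z x)
      have hb' : -(c x * ‖z x‖ ^ 2) ≤ ⟪A x (z x), z x⟫ := by
        have : ⟪(-(A x)) (z x), z x⟫ = -⟪A x (z x), z x⟫ := by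
          simp [inner_neg_left]
        rw [this] at hb
        simp only [hcdef]
        linarith
      have hE := Real.exp_pos (2 * F x)
      have hZ : (0:ℝ) ≤ ‖z x‖ ^ 2 := sq_nonneg _
      nlinarith [mul_nonneg (le_of_lt hE) (by linarith : (0:ℝ) ≤ ⟪A x (z x), z x⟫ + c x * ‖z x‖ ^ 2)]
    have mono : MonotoneOn h (Set.Icc t₀ t) := by
      apply monotoneOn_of_deriv_nonneg (convex_Icc t₀ t) hhc
      · rw [interior_Icc]
        exact fun x hx => (HD x hx).differentiableAt.differentiableWithinAt
      · rw [interior_Icc]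
        exact hderiv_nonneg
    have key : h t₀ ≤ h t :=
      mono (Set.left_mem_Icc.2 ht) (Set.right_mem_Icc.2 ht) ht
    have hFt₀ : F t₀ = 0 := intervalIntegral.integral_same
    have key2 : ‖z t₀‖ ^ 2 ≤ ‖z t‖ ^ 2 * Real.exp (2 * F t) := by
      have : h t₀ = ‖z t₀‖ ^ 2 := by simp [hhdef, hFt₀]
      rw [this] at key
      exact key
    show ‖z t₀‖ * Real.exp (-F t) ≤ ‖z t‖
    have hE2 : Real.exp (2 * F t) = Real.exp (F t) ^ 2 := by
      rw [two_mul, Real.exp_add, sq]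
    have h2 : ‖z t₀‖ ^ 2 ≤ (‖z t‖ * Real.exp (F t)) ^ 2 := by
      rw [mul_pow]; rw [hE2] at key2; linarith
    have h3 : ‖z t₀‖ ≤ ‖z t‖ * Real.exp (F t) := by
      have := Real.sqrt_le_sqrt h2
      rwa [Real.sqrt_sq (norm_nonneg _), Real.sqrt_sq (by positivity)] at this
    rw [Real.exp_neg, ← div_eq_mul_inv, div_le_iff₀ (Real.exp_pos _)]
    exact h3
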